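/- Let (S, A, P, R, γ) be a finite Markov decision process and π a stationary policy. Define the value-iteration sequence V_0 ≡ 0, V_{n+1} = T V_n (where T is the Bellman operator for π) and the metric-iteration sequence d_0 ≡ 0, d_{n+1} = F(d_n) (where F is the π-bisimulation operator). Then for every n ≥ 0 and all states s, t ∈ S, |V_n(s) − V_n(t)| ≤ d_n(s, t). -/
import Mathlib


/-- A probability distribution on a finite set, represented as a nonnegative
function summing to one. -/
def IsProb {X : Type*} [Fintype X] (μ : X → ℝ) : Prop :=
  (∀ x, 0 ≤ μ x) ∧ ∑ x, μ x = 1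

/-- A coupling of `μ ∈ Δ(X)` and `ν ∈ Δ(Y)`: a probability distribution on
`X × Y` whose first marginal is `μ` and whose second marginal is `ν`. -/
def IsCoupling {X Y : Type*} [Fintype X] [Fintype Y]
    (θ : X × Y → ℝ) (μ : X → ℝ) (ν : Y → ℝ) : Prop :=
  IsProb θ ∧ (∀ x, ∑ y, θ (x, y) = μ x) ∧ (∀ y, ∑ x, θ (x, y) = ν y)

/-- The 1-Wasserstein (optimal transport) cost between `μ ∈ Δ(X)` and `ν ∈ Δ(Y)`
with ground cost `d`. -/
noncomputable def Wass {X Y : Type*} [Fintype X] [Fintype Y]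
    (d : X → Y → ℝ) (μ : X → ℝ) (ν : Y → ℝ) : ℝ :=
  sInf {c | ∃ θ : X × Y → ℝ, IsCoupling θ μ ν ∧ c = ∑ p : X × Y, θ p * d p.1 p.2}

/-- `R^π_s = ∑ₐ π(a|s) R(s,a)`, the expected immediate reward of policy `π` at `s`. -/
def Rpi {S A : Type*} [Fintype A] (R : S → A → ℝ) (π : S → A → ℝ) (s : S) : ℝ :=
  ∑ a, π s a * R s a

/-- `P^π_s(s') = ∑ₐ π(a|s) P(s'|s,a)`, the state-transition kernel induced by `π`. -/
def Ppi {S A : Type*} [Fintype A] (P : S → A → S → ℝ) (π : S → A → ℝ) (s s' : S) : ℝ :=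
  ∑ a, π s a * P s a s'

/-- The Bellman operator of policy `π`:
`(T V)(s) = R^π_s + γ ∑_{s'} P^π_s(s') V(s')`. -/
def bellman {S A : Type*} [Fintype S] [Fintype A]
    (γ : ℝ) (R : S → A → ℝ) (P : S → A → S → ℝ) (π : S → A → ℝ)
    (V : S → ℝ) (s : S) : ℝ :=
  Rpi R π s + γ * ∑ s', Ppi P π s s' * V s'

/-- The π-bisimulation operator:
`F(d)(s,t) = |R^π_s − R^π_t| + γ W_d(P^π_s, P^π_t)`. -/
noncomputable def bisimF {S A : Type*} [Fintype S] [Fintype A]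
    (γ : ℝ) (R : S → A → ℝ) (P : S → A → S → ℝ) (π : S → A → ℝ)
    (d : S → S → ℝ) (s t : S) : ℝ :=
  |Rpi R π s - Rpi R π t| + γ * Wass d (Ppi P π s) (Ppi P π t)

lemma Ppi_isProb {S A : Type*} [Fintype S] [Fintype A]
    (P : S → A → S → ℝ) (hP : ∀ s a, IsProb (P s a))
    (π : S → A → ℝ) (hπ : ∀ s, IsProb (π s)) (s : S) : IsProb (Ppi P π s) := by
  constructor
  · intro s'
    exact Finset.sum_nonneg fun a _ => mul_nonneg ((hπ s).1 a) ((hP s a).1 s')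
  · simp only [Ppi]
    rw [Finset.sum_comm]
    calc ∑ a, ∑ s', π s a * P s a s' = ∑ a, π s a * ∑ s', P s a s' := by
          simp [Finset.mul_sum]
      _ = 1 := by simp only [(hP s ·|>.2)]; simpa using (hπ s).2

lemma prod_coupling {X Y : Type*} [Fintype X] [Fintype Y]
    (μ : X → ℝ) (ν : Y → ℝ) (hμ : IsProb μ) (hν : IsProb ν) :
    IsCoupling (fun p => μ p.1 * ν p.2) μ ν := by
  refine ⟨⟨fun p => mul_nonneg (hμ.1 _) (hν.1 _), ?_⟩, fun x => ?_, fun y => ?_⟩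
  · rw [Fintype.sum_prod_type]
    simp [← Finset.mul_sum, hν.2, hμ.2]
  · simp [← Finset.mul_sum, hν.2]
  · simp [← Finset.sum_mul, hμ.2]

lemma abs_sum_sub_le_Wass {X Y : Type*} [Fintype X] [Fintype Y]
    (d : X → Y → ℝ) (μ : X → ℝ) (ν : Y → ℝ) (hμ : IsProb μ) (hν : IsProb ν)
    (V : X → ℝ) (W : Y → ℝ) (h : ∀ x y, |V x - W y| ≤ d x y) :
    |∑ x, μ x * V x - ∑ y, ν y * W y| ≤ Wass d μ ν := by
  apply le_csInf
  · exact ⟨_, _, prod_coupling μ ν hμ hν, rfl⟩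
  · rintro c ⟨θ, ⟨⟨hθ0, _⟩, hm1, hm2⟩, rfl⟩
    have key : ∑ x, μ x * V x - ∑ y, ν y * W y = ∑ p : X × Y, θ p * (V p.1 - W p.2) := by
      have h1 : ∑ x, μ x * V x = ∑ p : X × Y, θ p * V p.1 := by
        rw [Fintype.sum_prod_type]
        refine Finset.sum_congr rfl fun x _ => ?_
        rw [← hm1 x, Finset.sum_mul]
      have h2 : ∑ y, ν y * W y = ∑ p : X × Y, θ p * W p.2 := by
        rw [Fintype.sum_prod_type_right]
        refine Finset.sum_congr rfl fun y _ => ?_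
        rw [← hm2 y, Finset.sum_mul]
      rw [h1, h2, ← Finset.sum_sub_distrib]
      refine Finset.sum_congr rfl fun p _ => by ring
    rw [key]
    calc |∑ p : X × Y, θ p * (V p.1 - W p.2)| ≤ ∑ p : X × Y, |θ p * (V p.1 - W p.2)| :=
          Finset.abs_sum_le_sum_abs _ _
      _ ≤ ∑ p : X × Y, θ p * d p.1 p.2 := by
          refine Finset.sum_le_sum fun p _ => ?_
          rw [abs_mul, abs_of_nonneg (hθ0 p)]
          exact mul_le_mul_of_nonneg_left (h p.1 p.2) (hθ0 p)

/-- along value iteration `V₀ ≡ 0`, `V_{n+1} = T V_n` and metric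
iteration `d₀ ≡ 0`, `d_{n+1} = F(d_n)`, we have `|V_n(s) − V_n(t)| ≤ d_n(s,t)`
for all `n` and all states `s, t`. -/
theorem iterates_abs_value_sub_le_bisim_iterate {S A : Type*} [Fintype S] [Fintype A]
    (γ : ℝ) (hγ0 : 0 < γ) (hγ1 : γ < 1)
    (P : S → A → S → ℝ) (hP : ∀ s a, IsProb (P s a))
    (R : S → A → ℝ) (hR : ∀ s a, 0 ≤ R s a ∧ R s a ≤ 1 - γ)
    (π : S → A → ℝ) (hπ : ∀ s, IsProb (π s))
    (V : ℕ → S → ℝ) (hV0 : ∀ s, V 0 s = 0)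
    (hVsucc : ∀ n s, V (n + 1) s = bellman γ R P π (V n) s)
    (d : ℕ → S → S → ℝ) (hd0 : ∀ s t, d 0 s t = 0)
    (hdsucc : ∀ n s t, d (n + 1) s t = bisimF γ R P π (d n) s t) :
    ∀ n s t, |V n s - V n t| ≤ d n s t := by
  intro n
  induction n with
  | zero => intro s t; simp [hV0, hd0]
  | succ n ih =>
    intro s t
    rw [hVsucc, hVsucc, hdsucc, bellman, bellman, bisimF]
    have hW := abs_sum_sub_le_Wass (d n) (Ppi P π s) (Ppi P π t)
      (Ppi_isProb P hP π hπ s) (Ppi_isProb P hP π hπ t) (V n) (V n) (fun x y => ih x y)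
    calc |Rpi R π s + γ * ∑ s', Ppi P π s s' * V n s' -
          (Rpi R π t + γ * ∑ s', Ppi P π t s' * V n s')|
        ≤ |Rpi R π s - Rpi R π t| +
          |γ * ∑ s', Ppi P π s s' * V n s' - γ * ∑ s', Ppi P π t s' * V n s'| := by
          have := abs_add_le (Rpi R π s - Rpi R π t)
            (γ * ∑ s', Ppi P π s s' * V n s' - γ * ∑ s', Ppi P π t s' * V n s')
          calc _ = |(Rpi R π s - Rpi R π t) +
              (γ * ∑ s', Ppi P π s s' * V n s' - γ * ∑ s', Ppi P π t s' * V n s')| := by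
                ring_nf
            _ ≤ _ := this
      _ ≤ |Rpi R π s - Rpi R π t| + γ * Wass (d n) (Ppi P π s) (Ppi P π t) := by
          gcongr
          rw [← mul_sub, abs_mul, abs_of_pos hγ0]
          exact mul_le_mul_of_nonneg_left hW hγ0.le
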